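/- arXiv:2302.06323 — 2 statements merged into one kernel-verified Lean document; each statement's English description precedes it below -/
import Mathlib

section
/- Every polynomial invariant P ∈ ℚ[x,y,z] of the sequence n ↦ (2^n, 4^n, 8^n) lies in the ideal generated by x² − y and x³ − z. That is, if P(2^n, 4^n, 8^n) = 0 for all n ∈ ℕ, then P ∈ ⟨x² − y, x³ − z⟩. -/
open MvPolynomial

/-- Every polynomial invariant of the sequence `n ↦ (2ⁿ, 4ⁿ, 8ⁿ)` lies in the ideal
generated by `x² − y` and `x³ − z`. -/
theorem invariant_ideal_of_loop_248 (P : MvPolynomial (Fin 3) ℚ)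
    (hP : ∀ n : ℕ, eval (![(2 : ℚ) ^ n, 4 ^ n, 8 ^ n]) P = 0) :
    P ∈ Ideal.span {((X 0) ^ 2 - X 1 : MvPolynomial (Fin 3) ℚ),
        ((X 0) ^ 3 - X 2 : MvPolynomial (Fin 3) ℚ)} := by
  set I := Ideal.span {((X 0) ^ 2 - X 1 : MvPolynomial (Fin 3) ℚ),
        ((X 0) ^ 3 - X 2 : MvPolynomial (Fin 3) ℚ)} with hI
  -- univariate image
  set Q : Polynomial ℚ :=
    aeval ![Polynomial.X, Polynomial.X ^ 2, Polynomial.X ^ 3] P with hQ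
  have hQeval : ∀ n : ℕ, Q.eval ((2 : ℚ) ^ n) = 0 := by
    intro n
    have key : (Polynomial.aeval ((2:ℚ) ^ n) : Polynomial ℚ →ₐ[ℚ] ℚ).comp
        (aeval ![Polynomial.X, Polynomial.X ^ 2, Polynomial.X ^ 3]) =
        aeval ![(2 : ℚ) ^ n, 4 ^ n, 8 ^ n] := by
      apply MvPolynomial.algHom_ext
      intro i
      fin_cases i <;> simp <;> (rw [← pow_mul, mul_comm, pow_mul]; norm_num)
    have h := congrArg (fun f => f P) key
    simp only [AlgHom.comp_apply] at h
    calc Q.eval ((2:ℚ) ^ n) = Polynomial.aeval ((2:ℚ) ^ n) Q := by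
          simp [Polynomial.coe_aeval_eq_eval]
      _ = aeval ![(2 : ℚ) ^ n, 4 ^ n, 8 ^ n] P := h
      _ = eval ![(2 : ℚ) ^ n, 4 ^ n, 8 ^ n] P := by
          rw [aeval_def, MvPolynomial.eval, coe_eval₂Hom]
          norm_num
      _ = 0 := hP n
  have hQ0 : Q = 0 := by
    apply Polynomial.eq_zero_of_infinite_isRoot
    apply Set.Infinite.mono (s := Set.range fun n : ℕ => (2:ℚ) ^ n)
    · rintro x ⟨n, rfl⟩; exact hQeval n
    · apply Set.infinite_range_of_injective
      intro a b hab
      have h' : ((2 ^ a : ℕ) : ℚ) = ((2 ^ b : ℕ) : ℚ) := by push_cast; exact hab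
      exact Nat.pow_right_injective (le_refl 2) (Nat.cast_inj.mp h')
  -- substitution hom
  set φ : MvPolynomial (Fin 3) ℚ →ₐ[ℚ] MvPolynomial (Fin 3) ℚ :=
    aeval ![X 0, (X 0) ^ 2, (X 0) ^ 3] with hφ
  have hφP : φ P = 0 := by
    have key : ((Polynomial.aeval (X 0 : MvPolynomial (Fin 3) ℚ)).comp
        (aeval ![Polynomial.X, Polynomial.X ^ 2, Polynomial.X ^ 3]) :
          MvPolynomial (Fin 3) ℚ →ₐ[ℚ] MvPolynomial (Fin 3) ℚ) = φ := by
      apply MvPolynomial.algHom_ext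
      intro i
      fin_cases i <;> simp [hφ]
    have := congrArg (fun f => f P) key
    simp only [AlgHom.comp_apply] at this
    rw [← this, ← hQ, hQ0, map_zero]
  -- pass to the quotient
  rw [← Ideal.Quotient.eq_zero_iff_mem]
  have key : (Ideal.Quotient.mkₐ ℚ I).comp φ = Ideal.Quotient.mkₐ ℚ I := by
    apply MvPolynomial.algHom_ext
    intro i
    fin_cases i
    · simp [hφ]
    · simp only [hφ, AlgHom.comp_apply, aeval_X]
      have : ((X 0) ^ 2 - X 1 : MvPolynomial (Fin 3) ℚ) ∈ I :=
        Ideal.subset_span (by simp)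
      have h := (Ideal.Quotient.eq_zero_iff_mem (I := I)).mpr this
      simp only [map_sub] at h
      have : (Ideal.Quotient.mk I) ((X 0 : MvPolynomial (Fin 3) ℚ) ^ 2)
          = Ideal.Quotient.mk I (X 1) := by linear_combination h
      simpa [Ideal.Quotient.mkₐ_eq_mk] using this
    · simp only [hφ, AlgHom.comp_apply, aeval_X]
      have : ((X 0) ^ 3 - X 2 : MvPolynomial (Fin 3) ℚ) ∈ I :=
        Ideal.subset_span (by simp)
      have h := (Ideal.Quotient.eq_zero_iff_mem (I := I)).mpr this
      simp only [map_sub] at h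
      have : (Ideal.Quotient.mk I) ((X 0 : MvPolynomial (Fin 3) ℚ) ^ 3)
          = Ideal.Quotient.mk I (X 2) := by linear_combination h
      simpa [Ideal.Quotient.mkₐ_eq_mk] using this
  have := congrArg (fun f => f P) key.symm
  simp only [AlgHom.comp_apply] at this
  calc Ideal.Quotient.mk I P = Ideal.Quotient.mkₐ ℚ I P := rfl
    _ = Ideal.Quotient.mkₐ ℚ I (φ P) := this
    _ = 0 := by rw [hφP, map_zero]
end

section
/- The equation x³ + y³ = 1 has exactly two rational solutions: (1,0) and (0,1). -/
/-- The equation `x³ + y³ = 1` has exactly two rational solutions: `(1,0)` and `(0,1)`. -/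
theorem rational_points_cubic_fermat :
    {p : ℚ × ℚ | p.1 ^ 3 + p.2 ^ 3 = 1} = {((1 : ℚ), (0 : ℚ)), ((0 : ℚ), (1 : ℚ))} := by
  have flt : FermatLastTheoremWith ℚ 3 :=
    fermatLastTheoremFor_iff_rat.mp fermatLastTheoremThree
  ext ⟨x, y⟩
  simp only [Set.mem_setOf_eq, Set.mem_insert_iff, Set.mem_singleton_iff, Prod.mk.injEq]
  constructor
  · intro h
    by_cases hx : x = 0
    · right
      refine ⟨hx, ?_⟩
      subst hx
      nlinarith [sq_nonneg (y - 1), sq_nonneg (y + 1), sq_nonneg y]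
    · by_cases hy : y = 0
      · left
        refine ⟨?_, hy⟩
        subst hy
        nlinarith [sq_nonneg (x - 1), sq_nonneg (x + 1), sq_nonneg x]
      · exact absurd (by simpa using h) (flt x y 1 hx hy one_ne_zero)
  · rintro (⟨rfl, rfl⟩ | ⟨rfl, rfl⟩) <;> norm_num
end
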